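/- Suppose α > 0 and β > 0. Then the set of critical points of the butterfly potential V is exactly {0, α, −α, √(α² + β²), −√(α² + β²)}; moreover V has a local minimum at 0, local maxima at α and −α, and local minima at √(α² + β²) and −√(α² + β²). -/

import Mathlib

set_option maxHeartbeats 1000000 in
/-- for `α > 0`, `β > 0` the critical points of the symmetric
butterfly potential are exactly `{0, α, −α, √(α²+β²), −√(α²+β²)}`; `V` has a
local minimum at `0`, local maxima at `±α`, and local minima at `±√(α²+β²)`. -/
theorem stmt6 (α β a c : ℝ) (hα : 0 < α) (hβ : 0 < β)
    (ha : a = -3 * α ^ 2 - (3 / 2) * β ^ 2)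
    (hc : c = 3 * α ^ 2 * (α ^ 2 + β ^ 2))
    (V : ℝ → ℝ) (hV : ∀ x, V x = x ^ 6 + a * x ^ 4 + c * x ^ 2) :
    {x : ℝ | deriv V x = 0} =
      ({0, α, -α, Real.sqrt (α ^ 2 + β ^ 2), -Real.sqrt (α ^ 2 + β ^ 2)} : Set ℝ) ∧
    IsLocalMin V 0 ∧
    IsLocalMax V α ∧ IsLocalMax V (-α) ∧
    IsLocalMin V (Real.sqrt (α ^ 2 + β ^ 2)) ∧
    IsLocalMin V (-Real.sqrt (α ^ 2 + β ^ 2)) := by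
  obtain ⟨s, hsdef⟩ : ∃ s : ℝ, s = Real.sqrt (α ^ 2 + β ^ 2) := ⟨_, rfl⟩
  rw [← hsdef]
  have hs2 : s ^ 2 = α ^ 2 + β ^ 2 := hsdef ▸ Real.sq_sqrt (by positivity)
  have hVe : V = fun x => x ^ 6 + a * x ^ 4 + c * x ^ 2 := funext hV
  have hderiv : ∀ x : ℝ, deriv V x = 6 * x * (x - α) * (x + α) * (x - s) * (x + s) := by
    intro x
    have h1 : HasDerivAt V (6 * x ^ 5 + 4 * a * x ^ 3 + 2 * c * x) x := by
      rw [hVe]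
      have h := ((hasDerivAt_pow 6 x).add
        ((hasDerivAt_pow 4 x).const_mul a)).add ((hasDerivAt_pow 2 x).const_mul c)
      refine h.congr_deriv ?_
      push_cast
      ring
    rw [h1.deriv, ha, hc]
    linear_combination (6 * x * (x ^ 2 - α ^ 2)) * hs2
  have hid_α : ∀ x : ℝ, V x - V α = (x ^ 2 - α ^ 2) ^ 2 * (x ^ 2 - α ^ 2 - 3 / 2 * β ^ 2) := by
    intro x; rw [hV x, hV α, ha, hc]; ring
  have hid_nα : ∀ x : ℝ, V x - V (-α) = (x ^ 2 - α ^ 2) ^ 2 * (x ^ 2 - α ^ 2 - 3 / 2 * β ^ 2) := by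
    intro x; rw [hV x, hV (-α), ha, hc]; ring
  have hid_s : ∀ x : ℝ, V x - V s = (x ^ 2 - s ^ 2) ^ 2 * (x ^ 2 - α ^ 2 + 1 / 2 * β ^ 2) := by
    intro x
    have hVs : V s = (α ^ 2 + β ^ 2) ^ 3 + a * (α ^ 2 + β ^ 2) ^ 2 + c * (α ^ 2 + β ^ 2) := by
      rw [hV s, show s ^ 6 = (s ^ 2) ^ 3 from by ring, show s ^ 4 = (s ^ 2) ^ 2 from by ring, hs2]
    rw [hV x, hVs, ha, hc]
    linear_combination (x ^ 2 - α ^ 2 + 1 / 2 * β ^ 2) * (2 * x ^ 2 - α ^ 2 - β ^ 2 - s ^ 2) * hs2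
  have hid_ns : ∀ x : ℝ, V x - V (-s) = (x ^ 2 - s ^ 2) ^ 2 * (x ^ 2 - α ^ 2 + 1 / 2 * β ^ 2) := by
    intro x
    have : V (-s) = V s := by rw [hV (-s), hV s]; ring
    rw [this]; exact hid_s x
  have hcont2 : ∀ t : ℝ, Continuous fun x : ℝ => x ^ 2 - t := by
    intro t; continuity
  -- local max at a point t with t² = α² (uses the factorization hid)
  have maxAt : ∀ t : ℝ, t ^ 2 = α ^ 2 →
      (∀ x : ℝ, V x - V t = (x ^ 2 - α ^ 2) ^ 2 * (x ^ 2 - α ^ 2 - 3 / 2 * β ^ 2)) →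
      IsLocalMax V t := by
    intro t ht hid
    have hev : ∀ᶠ x in nhds t, x ^ 2 - (α ^ 2 + 3 / 2 * β ^ 2) < 0 := by
      have := ((hcont2 (α ^ 2 + 3 / 2 * β ^ 2)).tendsto t).eventually_lt_const
        (show t ^ 2 - (α ^ 2 + 3 / 2 * β ^ 2) < 0 by rw [ht]; nlinarith)
      exact this
    show ∀ᶠ x in nhds t, V x ≤ V t
    filter_upwards [hev] with x hx
    nlinarith [hid x, sq_nonneg (x ^ 2 - α ^ 2)]
  have minAtS : ∀ t : ℝ,
      (∀ x : ℝ, V x - V t = (x ^ 2 - s ^ 2) ^ 2 * (x ^ 2 - α ^ 2 + 1 / 2 * β ^ 2)) →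
      t ^ 2 = s ^ 2 → IsLocalMin V t := by
    intro t hid ht
    have hev : ∀ᶠ x in nhds t, 0 < x ^ 2 - (α ^ 2 - 1 / 2 * β ^ 2) := by
      have := ((hcont2 (α ^ 2 - 1 / 2 * β ^ 2)).tendsto t).eventually_const_lt
        (show (0:ℝ) < t ^ 2 - (α ^ 2 - 1 / 2 * β ^ 2) by rw [ht, hs2]; nlinarith)
      exact this
    show ∀ᶠ x in nhds t, V t ≤ V x
    filter_upwards [hev] with x hx
    nlinarith [hid x, sq_nonneg (x ^ 2 - s ^ 2)]
  refine ⟨?_, ?_, ?_, ?_, ?_, ?_⟩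
  · ext x
    simp only [Set.mem_setOf_eq, hderiv, Set.mem_insert_iff, Set.mem_singleton_iff]
    constructor
    · intro h
      have h' := h
      simp only [mul_eq_zero, sub_eq_zero, add_eq_zero_iff_eq_neg,
        OfNat.ofNat_ne_zero, false_or] at h'
      tauto
    · rintro (rfl | rfl | rfl | rfl | rfl) <;> ring
  · -- local min at 0
    have hc0 : (0:ℝ) < c := by rw [hc]; positivity
    have hev : ∀ᶠ x in nhds (0:ℝ), 0 < x ^ 4 + a * x ^ 2 + c := by
      have hcont : Continuous fun x : ℝ => x ^ 4 + a * x ^ 2 + c := by continuity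
      have := (hcont.tendsto 0).eventually_const_lt
        (show (0:ℝ) < 0 ^ 4 + a * 0 ^ 2 + c by simpa using hc0)
      exact this
    show ∀ᶠ x in nhds (0:ℝ), V 0 ≤ V x
    filter_upwards [hev] with x hx
    have hid : V x - V 0 = x ^ 2 * (x ^ 4 + a * x ^ 2 + c) := by rw [hV x, hV 0]; ring
    nlinarith [sq_nonneg x]
  · exact maxAt α rfl hid_α
  · exact maxAt (-α) (by ring) hid_nα
  · exact minAtS s hid_s rfl
  · exact minAtS (-s) hid_ns (by ring)
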